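/- Let G be a group and x ∈ G such that the cyclic subgroup ⟨x⟩ is 2-subnormal in G. Then x is a left 3-Engel element of G, i.e. [g, x, x, x] = 1 for all g ∈ G. -/
import Mathlib


/-- The paper's commutator convention: [a,b] = a⁻¹ b⁻¹ a b. -/
def pc {G : Type*} [Group G] (a b : G) : G := a⁻¹ * b⁻¹ * a * b

/-- A subgroup H is 2-subnormal in G if H ⊴ K ⊴ G for some subgroup K. -/
def IsTwoSubnormal {G : Type*} [Group G] (H : Subgroup G) : Prop :=
  ∃ K : Subgroup G, H ≤ K ∧ (H.subgroupOf K).Normal ∧ K.Normal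

/-- If ⟨x⟩ is 2-subnormal in G then x is a left 3-Engel element:
[g,x,x,x] = 1 for all g ∈ G. -/
theorem stmt_1 {G : Type*} [Group G] (x : G)
    (h : IsTwoSubnormal (Subgroup.zpowers x)) :
    ∀ g : G, pc (pc (pc g x) x) x = 1 := by
  obtain ⟨K, hle, hHn, hKn⟩ := h
  intro g
  have hxK : x ∈ K := hle (Subgroup.mem_zpowers x)
  have hcK : pc g x ∈ K := by
    have h1 : g⁻¹ * x⁻¹ * g ∈ K := by
      have := hKn.conj_mem x⁻¹ (K.inv_mem hxK) g⁻¹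
      simpa [mul_assoc] using this
    simpa [pc, mul_assoc] using K.mul_mem h1 hxK
  set c := pc g x with hc
  have hdx : pc c x ∈ Subgroup.zpowers x := by
    have hx' : (⟨x, hxK⟩ : K) ∈ (Subgroup.zpowers x).subgroupOf K := by
      simp [Subgroup.mem_subgroupOf, Subgroup.mem_zpowers]
    have h0 := hHn.conj_mem _ hx' (⟨c, hcK⟩ : K)⁻¹
    rw [Subgroup.mem_subgroupOf] at h0
    have h2 : c⁻¹ * x * c ∈ Subgroup.zpowers x := by
      simpa [mul_assoc] using h0
    have h3 : c⁻¹ * x⁻¹ * c ∈ Subgroup.zpowers x := by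
      have := (Subgroup.zpowers x).inv_mem h2
      simpa [mul_assoc] using this
    simpa [pc, mul_assoc] using (Subgroup.zpowers x).mul_mem h3 (Subgroup.mem_zpowers x)
  obtain ⟨k, hk⟩ := hdx
  rw [← hk]
  simp [pc]
  group
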